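/- Let 0 < L ≤ U, 0 ≤ 2β < L, ω > 1, ε ∈ [0, ω − 1], and set λ = (ω/(1 + ε) − 1)/(ω − 1). Let ALG, ADV, RORO, OPT be real numbers satisfying OPT > 0, ALG ≥ λ·ADV + (1 − λ)·RORO, RORO ≥ OPT/ω, ADV ≤ OPT, and ADV ≥ ((L − 2β)/U)·OPT. Then ADV ≤ (1 + ε)·ALG, and OPT ≤ ( (ω − 1)·(1 + ε) / ( ε + ((L − 2β)/U)·(ω − 1 − ε) ) ) · ALG. -/

import Mathlib

theorem ro_advice_max_consistency_robustness
    (L U β ω ε lam ALG ADV RORO OPT : ℝ)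
    (hL : 0 < L) (hLU : L ≤ U) (hβ : 0 ≤ β) (hβL : 2 * β < L)
    (hω : 1 < ω) (hε : ε ∈ Set.Icc (0 : ℝ) (ω - 1))
    (hlam : lam = (ω / (1 + ε) - 1) / (ω - 1))
    (hOPTpos : 0 < OPT)
    (hALG : ALG ≥ lam * ADV + (1 - lam) * RORO)
    (hRORO : RORO ≥ OPT / ω)
    (hADV1 : ADV ≤ OPT) (hADV2 : ADV ≥ ((L - 2 * β) / U) * OPT) :
    ADV ≤ (1 + ε) * ALG ∧
    OPT ≤ ((ω - 1) * (1 + ε) / (ε + ((L - 2 * β) / U) * (ω - 1 - ε))) * ALG := by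
  obtain ⟨hε0, hεω⟩ := hε
  have hU : (0:ℝ) < U := lt_of_lt_of_le hL hLU
  have hρ : 0 < (L - 2 * β) / U := div_pos (by linarith) hU
  have hρ1 : (L - 2 * β) / U ≤ 1 := (div_le_one hU).2 (by linarith)
  have h1ε : (0:ℝ) < 1 + ε := by linarith
  have hω1 : (0:ℝ) < ω - 1 := by linarith
  have hω0 : (0:ℝ) < ω := by linarith
  have hADVpos : 0 < ADV := lt_of_lt_of_le (mul_pos hρ hOPTpos) hADV2
  have hlamkey : lam * ((1 + ε) * (ω - 1)) = ω - (1 + ε) := by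
    rw [hlam]; field_simp
  have hlam0 : 0 ≤ lam := by
    rw [hlam]
    apply div_nonneg _ (le_of_lt hω1)
    rw [sub_nonneg, le_div_iff₀ h1ε]; linarith
  have hlam1 : lam ≤ 1 := by
    rw [hlam, div_le_one hω1]
    have : ω / (1 + ε) ≤ ω := by
      rw [div_le_iff₀ h1ε]; nlinarith
    linarith
  have hR : RORO * ω ≥ OPT := by
    have := (div_le_iff₀ hω0).1 hRORO
    linarith
  have hALG' : ALG * ω ≥ lam * ADV * ω + (1 - lam) * OPT := by
    nlinarith [mul_le_mul_of_nonneg_left hR (by linarith : (0:ℝ) ≤ 1 - lam)]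
  constructor
  · nlinarith [mul_le_mul_of_nonneg_left hADV1 (by nlinarith : (0:ℝ) ≤ (1 - lam) * (1 + ε))]
  · have hden : 0 < ε + ((L - 2 * β) / U) * (ω - 1 - ε) := by
      rcases lt_or_eq_of_le hε0 with h | h
      · nlinarith
      · nlinarith
    rw [div_mul_eq_mul_div, le_div_iff₀ hden]
    have hωε : (0:ℝ) ≤ ω - 1 - ε := by linarith
    have h1 : ALG * ω * ((1+ε)*(ω-1)) ≥ (lam * ADV * ω + (1 - lam) * OPT) * ((1+ε)*(ω-1)) :=
      mul_le_mul_of_nonneg_right hALG' (by positivity)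
    have h2 : ADV * ((ω-1-ε)*ω) ≥ ((L - 2 * β) / U * OPT) * ((ω-1-ε)*ω) :=
      mul_le_mul_of_nonneg_right hADV2 (by positivity)
    have heq : (lam * ADV * ω + (1 - lam) * OPT) * ((1+ε)*(ω-1))
        = ADV*ω*(ω-1-ε) + OPT*(ε*ω) := by
      linear_combination (ADV * ω - OPT) * hlamkey
    rw [← mul_le_mul_iff_of_pos_right hω0]
    linarith [h1, h2, heq]
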